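/- arXiv:2601.08596 — 2 statements merged into one kernel-verified Lean document; each statement's English description precedes it below -/
import Mathlib

section
/- Let G be an undirected graph on p nodes with extended edge set 𝒱 = E ∪ {(i,i) : i ∈ V}. For any symmetric positive definite p×p matrix Σ, there exists at most one symmetric positive definite matrix Q with Q_{ij} = 0 for all (i,j) ∉ 𝒱 such that (Q⁻¹)_{ij} = Σ_{ij} for all (i,j) ∈ 𝒱. -/
open Matrix
open scoped MatrixOrder

lemma trace_conj_zero {n : ℕ} {R N : Matrix (Fin n) (Fin n) ℝ} (hR : R.PosDef)
    (h : (Nᵀ * R * N).trace = 0) : N = 0 := by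
  have hdiag : ∀ j, (Nᵀ * R * N) j j = (fun i => N i j) ⬝ᵥ R *ᵥ (fun i => N i j) := by
    intro j
    simp only [Matrix.mul_apply, dotProduct, Matrix.mulVec, Matrix.transpose_apply]
    simp only [Finset.sum_mul, Finset.mul_sum]
    rw [Finset.sum_comm]
    exact Finset.sum_congr rfl fun a _ => Finset.sum_congr rfl fun b _ => by ring
  have hnonneg : ∀ j, 0 ≤ (Nᵀ * R * N) j j := by
    intro j
    rw [hdiag j]
    have := hR.posSemidef.dotProduct_mulVec_nonneg (fun i => N i j)
    simpa using this
  have hzero : ∀ j, (Nᵀ * R * N) j j = 0 := by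
    intro j
    have := (Finset.sum_eq_zero_iff_of_nonneg (fun i _ => hnonneg i)).mp h
    exact this j (Finset.mem_univ j)
  ext i j
  by_contra hne
  have hx : (fun i => N i j) ≠ 0 := by
    intro h0
    exact hne (congrFun h0 i)
  have := hR.dotProduct_mulVec_pos hx
  rw [show star (fun i => N i j) = (fun i => N i j) from rfl] at this
  rw [← hdiag j] at this
  linarith [hzero j]

/-- Uniqueness part of the positive definite completion theorem (Grone et al., 1984):
for a graph `G` on `p` nodes with extended edge set `𝒱 = E ∪ {(i,i)}` and a symmetric
positive definite matrix `S`, there is at most one positive definite `Q` vanishing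
outside `𝒱` whose inverse agrees with `S` on `𝒱`. -/
theorem pd_completion_unique {p : ℕ} (G : SimpleGraph (Fin p))
    (S Q Q' : Matrix (Fin p) (Fin p) ℝ)
    (hS : S.PosDef) (hQ : Q.PosDef) (hQ' : Q'.PosDef)
    (hQzero : ∀ i j, ¬ (G.Adj i j ∨ i = j) → Q i j = 0)
    (hQ'zero : ∀ i j, ¬ (G.Adj i j ∨ i = j) → Q' i j = 0)
    (hQinv : ∀ i j, (G.Adj i j ∨ i = j) → Q⁻¹ i j = S i j)
    (hQ'inv : ∀ i j, (G.Adj i j ∨ i = j) → Q'⁻¹ i j = S i j) :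
    Q = Q' := by
  set D := Q - Q' with hD
  set M := Q'⁻¹ - Q⁻¹ with hM
  have hQu : IsUnit Q.det := (isUnit_iff_isUnit_det _).1 hQ.isUnit
  have hQ'u : IsUnit Q'.det := (isUnit_iff_isUnit_det _).1 hQ'.isUnit
  -- M = Q'⁻¹ * D * Q⁻¹
  have hMeq : M = Q'⁻¹ * D * Q⁻¹ := by
    rw [hM, hD]
    rw [Matrix.mul_sub, Matrix.sub_mul, Matrix.mul_assoc, Matrix.mul_nonsing_inv _ hQu,
      Matrix.nonsing_inv_mul _ hQ'u]
    simp [Matrix.mul_one, Matrix.one_mul]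
  -- entrywise: D i k * M k i = 0
  have hentry : ∀ i k, D i k * M k i = 0 := by
    intro i k
    by_cases h : G.Adj i k ∨ i = k
    · have h' : G.Adj k i ∨ k = i := by
        rcases h with h | h
        · exact Or.inl h.symm
        · exact Or.inr h.symm
      have : M k i = 0 := by
        rw [hM]
        simp [Matrix.sub_apply, hQ'inv k i h', hQinv k i h']
      rw [this, mul_zero]
    · have : D i k = 0 := by
        rw [hD]
        simp [Matrix.sub_apply, hQzero i k h, hQ'zero i k h]
      rw [this, zero_mul]
  have htr : (D * M).trace = 0 := by
    rw [Matrix.trace]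
    apply Finset.sum_eq_zero
    intro i _
    rw [Matrix.diag_apply, Matrix.mul_apply]
    exact Finset.sum_eq_zero fun k _ => hentry i k
  -- square root of Q⁻¹
  have hQinvPD : (Q⁻¹).PosDef := hQ.inv
  have hQ'invPD : (Q'⁻¹).PosDef := hQ'.inv
  set B := CFC.sqrt (Q⁻¹) with hB
  have hBB : B * B = Q⁻¹ := CFC.sqrt_mul_sqrt_self _ hQinvPD.posSemidef.nonneg
  have hBsym : Bᵀ = B := by
    have := (CFC.sqrt_nonneg (Q⁻¹)).posSemidef.isHermitian
    simpa [Matrix.IsHermitian, Matrix.conjTranspose_eq_transpose_of_trivial] using this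
  have hDsym : Dᵀ = D := by
    have h1 : Qᵀ = Q := by
      simpa [Matrix.IsHermitian, Matrix.conjTranspose_eq_transpose_of_trivial] using hQ.isHermitian
    have h2 : Q'ᵀ = Q' := by
      simpa [Matrix.IsHermitian, Matrix.conjTranspose_eq_transpose_of_trivial] using hQ'.isHermitian
    rw [hD, Matrix.transpose_sub, h1, h2]
  -- trace ((D*B)ᵀ * Q'⁻¹ * (D*B)) = 0
  have key : ((D * B)ᵀ * Q'⁻¹ * (D * B)).trace = 0 := by
    have e1 : (D * B)ᵀ * Q'⁻¹ * (D * B) = B * (D * Q'⁻¹ * D * B) := by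
      rw [Matrix.transpose_mul, hBsym, hDsym]
      simp only [Matrix.mul_assoc]
    rw [e1, Matrix.trace_mul_comm, Matrix.mul_assoc, hBB]
    have e2 : D * Q'⁻¹ * D * Q⁻¹ = D * M := by
      rw [hMeq]; simp only [Matrix.mul_assoc]
    calc ((D * Q'⁻¹ * D) * Q⁻¹).trace = (D * M).trace := by
          rw [← e2]
      _ = 0 := htr
  have hDB : D * B = 0 := trace_conj_zero hQ'invPD key
  have hDQinv : D * Q⁻¹ = 0 := by
    rw [← hBB, ← Matrix.mul_assoc, hDB, Matrix.zero_mul]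
  have : D = 0 := by
    have := congrArg (· * Q) hDQinv
    simpa [Matrix.mul_assoc, Matrix.nonsing_inv_mul _ hQu] using this
  have := sub_eq_zero.mp this
  exact this
end

section
/- The Wishart density: for δ > 2 and D ∈ ℙ, the function S ↦ |S|^{(δ−2)/2} exp(−(1/2) tr(S D)) is integrable over the cone ℙ of symmetric positive definite p×p matrices (with respect to Lebesgue measure on the p(p+1)/2 free entries), so the Wishart normalizing constant I_p(δ, D) is finite. -/
open MeasureTheory Matrix

/-- The free entries (upper triangle including the diagonal) of a symmetric `p × p`
matrix. -/
abbrev FreeIdx (p : ℕ) := {q : Fin p × Fin p // q.1 ≤ q.2}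

/-- The symmetric matrix determined by its free entries. -/
def toSym {p : ℕ} (v : FreeIdx p → ℝ) : Matrix (Fin p) (Fin p) ℝ :=
  fun i j => if h : i ≤ j then v ⟨(i, j), h⟩ else v ⟨(j, i), le_of_not_ge h⟩

section Aux

open Real Set

variable {n : Type*} [Fintype n] [DecidableEq n]

lemma psd_trace_nonneg' {S : Matrix n n ℝ} (hS : S.PosSemidef) : 0 ≤ S.trace :=
  Finset.sum_nonneg fun i _ => by
    simpa [Matrix.mulVec_single, single_dotProduct] using hS.dotProduct_mulVec_nonneg (Pi.single i 1)

lemma trace_mul_nonneg' {A B : Matrix n n ℝ} (hA : A.PosSemidef) (hB : B.PosSemidef) :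
    0 ≤ (A * B).trace := by
  open scoped MatrixOrder in
  obtain ⟨X, rfl⟩ := CStarAlgebra.nonneg_iff_eq_star_mul_self.mp hA.nonneg
  have h2 : (star X * X * B).trace = (X * B * Xᴴ).trace := by
    rw [mul_assoc, Matrix.trace_mul_comm]; rfl
  rw [h2]
  exact psd_trace_nonneg' (hB.mul_mul_conjTranspose_same X)

lemma trace_eq_sum_eig {S : Matrix n n ℝ} (hS : S.IsHermitian) :
    S.trace = ∑ i, hS.eigenvalues i := by
  conv_lhs => rw [hS.spectral_theorem, Unitary.conjStarAlgAut_apply]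
  rw [Matrix.trace_mul_cycle]
  have hU : (star (hS.eigenvectorUnitary : Matrix n n ℝ)) *
      (hS.eigenvectorUnitary : Matrix n n ℝ) = 1 :=
    Matrix.mem_unitaryGroup_iff'.mp hS.eigenvectorUnitary.2
  rw [hU, one_mul, Matrix.trace_diagonal]
  simp

lemma sub_smul_one_psd {D : Matrix n n ℝ} (hD : D.PosDef) {ε : ℝ}
    (hε : ∀ i, ε ≤ hD.1.eigenvalues i) : (D - ε • 1).PosSemidef := by
  set U := (hD.1.eigenvectorUnitary : Matrix n n ℝ) with hUdef
  have hUU : U * star U = 1 := Matrix.mem_unitaryGroup_iff.mp hD.1.eigenvectorUnitary.2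
  have key : D - ε • 1 = U * (Matrix.diagonal (fun i => hD.1.eigenvalues i - ε)) * star U := by
    have h1 : (ε • (1 : Matrix n n ℝ)) = U * (ε • (1 : Matrix n n ℝ)) * star U := by
      rw [Matrix.mul_smul, Matrix.smul_mul, mul_one, hUU]
    conv_lhs => rw [hD.1.spectral_theorem, Unitary.conjStarAlgAut_apply, h1]
    rw [← Matrix.sub_mul, ← Matrix.mul_sub]
    congr 2
    rw [Matrix.smul_one_eq_diagonal, Matrix.diagonal_sub]
    simp [Function.comp]
  rw [key]
  have hdiag : (Matrix.diagonal (fun i => hD.1.eigenvalues i - ε)).PosSemidef :=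
    Matrix.PosSemidef.diagonal (fun i => sub_nonneg.mpr (hε i))
  have := hdiag.mul_mul_conjTranspose_same U
  simpa [Matrix.star_eq_conjTranspose] using this

lemma abs_entry_le_trace {S : Matrix n n ℝ} (hS : S.PosSemidef) (i j : n) :
    |S i j| ≤ S.trace := by
  have hd : ∀ k, 0 ≤ S k k := fun k => by
    simpa [Matrix.mulVec_single, single_dotProduct] using hS.dotProduct_mulVec_nonneg (Pi.single k 1)
  have hdt : ∀ k, S k k ≤ S.trace := fun k =>
    Finset.single_le_sum (f := fun k => S k k) (fun l _ => hd l) (Finset.mem_univ k)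
  rcases eq_or_ne i j with rfl | hij
  · rw [abs_of_nonneg (hd i)]; exact hdt i
  · have hsym : S j i = S i j := by
      have := congrFun (congrFun hS.1 i) j
      simpa using this
    have h1 : 0 ≤ S i i + S i j + (S i j + S j j) := by
      have := hS.dotProduct_mulVec_nonneg (Pi.single i 1 + Pi.single j 1)
      simpa [Matrix.mulVec_add, Matrix.mulVec_single, single_dotProduct,
        add_dotProduct, dotProduct_add, hsym, Pi.single_apply, hij,
        Ne.symm hij] using this
    have h2 : S i j ≤ S i i - S i j + S j j := by
      have := hS.dotProduct_mulVec_nonneg (Pi.single i 1 - Pi.single j 1)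
      simpa [Matrix.mulVec_sub, Matrix.mulVec_single, single_dotProduct,
        sub_dotProduct, dotProduct_sub, hsym, Pi.single_apply, hij,
        Ne.symm hij] using this
    have hti := hdt i
    have htj := hdt j
    rw [abs_le]
    constructor <;> nlinarith [hd i, hd j]

lemma integrable_exp_neg_mul_abs {c : ℝ} (hc : 0 < c) :
    Integrable fun x : ℝ => Real.exp (-(c * |x|)) := by
  have base : IntegrableOn (fun x : ℝ => Real.exp (-(c * |x|))) (Ioi 0) := by
    apply (exp_neg_integrableOn_Ioi 0 hc).congr_fun ?_ measurableSet_Ioi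
    intro x hx
    have : |x| = x := abs_of_nonneg (le_of_lt hx)
    simp [this, neg_mul]
  rw [← integrableOn_univ, ← @Iio_union_Ici _ _ (0 : ℝ), integrableOn_union,
    integrableOn_Ici_iff_integrableOn_Ioi]
  refine ⟨?_, base⟩
  rw [← (Measure.measurePreserving_neg (volume : Measure ℝ)).integrableOn_comp_preimage
      (Homeomorph.neg ℝ).measurableEmbedding]
  simpa only [Function.comp_def, abs_neg, neg_preimage, neg_Iio, neg_neg, neg_zero] using base

lemma lintegral_prod_exp_lt_top {ι : Type*} [Fintype ι] {c C : ℝ} (hc : 0 < c) (hC : 0 ≤ C) :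
    ∫⁻ v : ι → ℝ, ENNReal.ofReal (C * ∏ q : ι, Real.exp (-(c * |v q|))) < ⊤ := by
  have hInt : Integrable fun v : ι → ℝ => C * ∏ q : ι, Real.exp (-(c * |v q|)) :=
    (Integrable.fintype_prod (f := fun _ x => Real.exp (-(c * |x|)))
      (fun _ => integrable_exp_neg_mul_abs hc)).const_mul C
  have h0 : ∀ v : ι → ℝ, 0 ≤ C * ∏ q : ι, Real.exp (-(c * |v q|)) := fun v =>
    mul_nonneg hC (Finset.prod_nonneg fun q _ => (Real.exp_pos _).le)
  exact (hasFiniteIntegral_iff_ofReal (ae_of_all _ h0)).mp hInt.hasFiniteIntegral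

end Aux

/-- For `δ > 2` and `D ∈ ℙ`, the Wishart kernel
`S ↦ |S|^{(δ−2)/2} exp(−(1/2) tr(S D))` is integrable over the cone of symmetric
positive definite `p × p` matrices with respect to Lebesgue measure on the
`p(p+1)/2` free entries, so the Wishart normalizing constant `I_p(δ, D)` is finite. -/
theorem wishart_normalizing_constant_finite {p : ℕ} (δ : ℝ) (hδ : 2 < δ)
    (D : Matrix (Fin p) (Fin p) ℝ) (hD : D.PosDef) :
    ∫⁻ v in {v : FreeIdx p → ℝ | (toSym v).PosDef},
      ENNReal.ofReal ((toSym v).det ^ ((δ - 2) / 2) *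
        Real.exp (-(1 / 2 : ℝ) * (toSym v * D).trace)) < ⊤ := by
  rcases Nat.eq_zero_or_pos p with rfl | hp
  · -- p = 0 : the integrand is identically 1 and the total measure is 1
    haveI : IsEmpty (FreeIdx 0) := ⟨fun q => q.1.1.elim0⟩
    have hone : ∀ v : FreeIdx 0 → ℝ,
        ENNReal.ofReal ((toSym v).det ^ ((δ - 2) / 2) *
          Real.exp (-(1 / 2 : ℝ) * (toSym v * D).trace)) = 1 := by
      intro v
      simp [Matrix.det_isEmpty, Matrix.trace, Real.one_rpow]
    calc ∫⁻ v in {v : FreeIdx 0 → ℝ | (toSym v).PosDef},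
          ENNReal.ofReal ((toSym v).det ^ ((δ - 2) / 2) *
            Real.exp (-(1 / 2 : ℝ) * (toSym v * D).trace))
        = ∫⁻ _ in {v : FreeIdx 0 → ℝ | (toSym v).PosDef}, 1 :=
          lintegral_congr fun v => hone v
      _ = volume {v : FreeIdx 0 → ℝ | (toSym v).PosDef} := by
          rw [lintegral_one, Measure.restrict_apply_univ]
      _ ≤ volume (Set.univ : Set (FreeIdx 0 → ℝ)) := measure_mono (Set.subset_univ _)
      _ < ⊤ := by
          rw [volume_pi, Measure.pi_univ]
          simp
  · -- p > 0
    haveI : Nonempty (Fin p) := ⟨⟨0, hp⟩⟩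
    haveI : Nonempty (FreeIdx p) := ⟨⟨(⟨0, hp⟩, ⟨0, hp⟩), le_refl _⟩⟩
    set α : ℝ := (δ - 2) / 2 with hαdef
    have hα : 0 < α := by
      have : (0:ℝ) < δ - 2 := by linarith
      positivity
    -- the smallest eigenvalue of D
    set ε : ℝ := Finset.univ.inf' Finset.univ_nonempty hD.1.eigenvalues with hεdef
    have hεpos : 0 < ε := by
      rw [hεdef, Finset.lt_inf'_iff]
      exact fun i _ => hD.eigenvalues_pos i
    have hεle : ∀ i, ε ≤ hD.1.eigenvalues i := fun i =>
      Finset.inf'_le _ (Finset.mem_univ i)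
    have hDsub : (D - ε • 1).PosSemidef := sub_smul_one_psd hD hεle
    set N : ℕ := Fintype.card (FreeIdx p) with hNdef
    have hN : 0 < N := Fintype.card_pos
    set c : ℝ := ε / (4 * N) with hcdef
    have hc : 0 < c := by positivity
    set m : ℕ := ⌈(p : ℝ) * α⌉₊ with hmdef
    have hβ : 0 < (p : ℝ) * α := by positivity
    have hm : 0 < m := Nat.ceil_pos.mpr hβ
    set K : ℝ := (4 * (m : ℝ) / ε) ^ m with hKdef
    have hK : 0 ≤ K := by positivity
    set C : ℝ := 1 + K with hCdef
    have hC : 0 ≤ C := by positivity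
    have hGmeas : Measurable fun v : FreeIdx p → ℝ =>
        ENNReal.ofReal (C * ∏ q : FreeIdx p, Real.exp (-(c * |v q|))) := by
      apply ENNReal.measurable_ofReal.comp
      apply Measurable.const_mul
      exact Finset.measurable_prod _ fun q _ => by
        fun_prop
    have key : ∀ v ∈ {v : FreeIdx p → ℝ | (toSym v).PosDef},
        ENNReal.ofReal ((toSym v).det ^ ((δ - 2) / 2) *
          Real.exp (-(1 / 2 : ℝ) * (toSym v * D).trace)) ≤
        ENNReal.ofReal (C * ∏ q : FreeIdx p, Real.exp (-(c * |v q|))) := by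
      intro v hv
      apply ENNReal.ofReal_le_ofReal
      set S := toSym v with hSdef
      have hvS : S.PosDef := hv
      set t : ℝ := S.trace with htdef
      have ht0 : 0 < t := by
        rw [htdef, trace_eq_sum_eig hvS.1]
        exact Finset.sum_pos (fun i _ => hvS.eigenvalues_pos i) Finset.univ_nonempty
      -- determinant bound
      have hdet_le : S.det ≤ t ^ p := by
        have h1 : S.det = ∏ i, hvS.1.eigenvalues i := by
          have := hvS.1.det_eq_prod_eigenvalues
          simpa using this
        rw [h1]
        calc ∏ i, hvS.1.eigenvalues i ≤ ∏ _i : Fin p, t :=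
              Finset.prod_le_prod (fun i _ => (hvS.eigenvalues_pos i).le)
                (fun i _ => by
                  rw [htdef, trace_eq_sum_eig hvS.1]
                  exact Finset.single_le_sum
                    (f := fun j => hvS.1.eigenvalues j)
                    (fun j _ => (hvS.eigenvalues_pos j).le) (Finset.mem_univ i))
          _ = t ^ p := by
              rw [Finset.prod_const, Finset.card_univ, Fintype.card_fin]
      have hdet_rpow : S.det ^ α ≤ t ^ ((p : ℝ) * α) := by
        have h := Real.rpow_le_rpow hvS.det_pos.le hdet_le hα.le
        rwa [← Real.rpow_natCast t p, ← Real.rpow_mul ht0.le] at h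
      -- polynomial dominated by exponential
      have hstep : t ^ ((p : ℝ) * α) ≤ 1 + K * Real.exp (ε * t / 4) := by
        have hKexp : 0 ≤ K * Real.exp (ε * t / 4) :=
          mul_nonneg hK (Real.exp_pos _).le
        rcases le_or_gt t 1 with ht1 | ht1
        · have := Real.rpow_le_one ht0.le ht1 hβ.le
          linarith
        · have hA : t ^ ((p : ℝ) * α) ≤ t ^ (m : ℝ) :=
            Real.rpow_le_rpow_of_exponent_le ht1.le (Nat.le_ceil _)
          have hB : t ^ (m : ℝ) = t ^ m := Real.rpow_natCast t m
          have hmR : (0:ℝ) < (m:ℝ) := Nat.cast_pos.mpr hm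
          have h1 : ε * t / (4 * m) ≤ Real.exp (ε * t / (4 * m)) := by
            linarith [Real.add_one_le_exp (ε * t / (4 * m))]
          have hnn : 0 ≤ ε * t / (4 * m) := by positivity
          have h2 : (ε * t / (4 * m)) ^ m ≤ (Real.exp (ε * t / (4 * m))) ^ m :=
            pow_le_pow_left₀ hnn h1 m
          have h3 : (Real.exp (ε * t / (4 * m))) ^ m = Real.exp (ε * t / 4) := by
            rw [← Real.exp_nat_mul]
            congr 1
            field_simp
          have h4 : K * (ε * t / (4 * m)) ^ m = t ^ m := by
            rw [hKdef, ← mul_pow]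
            congr 1
            field_simp
          have h5 : t ^ m ≤ K * Real.exp (ε * t / 4) := by
            rw [← h4, ← h3]
            exact mul_le_mul_of_nonneg_left h2 hK
          calc t ^ ((p : ℝ) * α) ≤ t ^ (m : ℝ) := hA
            _ = t ^ m := hB
            _ ≤ K * Real.exp (ε * t / 4) := h5
            _ ≤ 1 + K * Real.exp (ε * t / 4) := by linarith
      -- trace bound
      have htrD : ε * t ≤ (S * D).trace := by
        have h0 := trace_mul_nonneg' hvS.posSemidef hDsub
        rw [Matrix.mul_sub, Matrix.trace_sub, Matrix.mul_smul, mul_one,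
          Matrix.trace_smul] at h0
        simp only [smul_eq_mul] at h0
        linarith
      -- sum of absolute values of coordinates
      have hvq : ∀ q : FreeIdx p, v q = S q.1.1 q.1.2 := by
        intro q
        rw [hSdef]
        show v q = toSym v q.1.1 q.1.2
        rw [toSym, dif_pos q.2]
      have hsum : ∑ q : FreeIdx p, |v q| ≤ (N : ℝ) * t := by
        calc ∑ q : FreeIdx p, |v q| ≤ ∑ _q : FreeIdx p, t :=
              Finset.sum_le_sum fun q _ => by
                rw [hvq q]; exact abs_entry_le_trace hvS.posSemidef _ _
          _ = (N : ℝ) * t := by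
              rw [Finset.sum_const, Finset.card_univ, nsmul_eq_mul, hNdef]
      -- put everything together
      have e1 : Real.exp (ε * t / 4) * Real.exp (-(ε / 2 * t)) =
          Real.exp (-(ε / 4 * t)) := by
        rw [← Real.exp_add]
        ring_nf
      have e2 : Real.exp (-(ε / 2 * t)) ≤ Real.exp (-(ε / 4 * t)) := by
        apply Real.exp_le_exp.mpr
        nlinarith
      have e3 : Real.exp (-(ε / 4 * t)) ≤
          Real.exp (-(c * ∑ q : FreeIdx p, |v q|)) := by
        apply Real.exp_le_exp.mpr
        have hcs : c * (∑ q : FreeIdx p, |v q|) ≤ c * ((N : ℝ) * t) :=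
          mul_le_mul_of_nonneg_left hsum hc.le
        have hceq : c * ((N : ℝ) * t) = ε / 4 * t := by
          rw [hcdef]
          have hNne : ((N : ℝ)) ≠ 0 := Nat.cast_ne_zero.mpr hN.ne'
          field_simp
        linarith [hcs.trans_eq hceq]
      have e4 : Real.exp (-(c * ∑ q : FreeIdx p, |v q|)) =
          ∏ q : FreeIdx p, Real.exp (-(c * |v q|)) := by
        rw [← Real.exp_sum]
        congr 1
        rw [Finset.mul_sum, ← Finset.sum_neg_distrib]
      calc S.det ^ ((δ - 2) / 2) * Real.exp (-(1 / 2 : ℝ) * (S * D).trace)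
          = S.det ^ α * Real.exp (-(1 / 2 : ℝ) * (S * D).trace) := by rw [hαdef]
        _ ≤ t ^ ((p : ℝ) * α) * Real.exp (-(1 / 2 : ℝ) * (S * D).trace) :=
            mul_le_mul_of_nonneg_right hdet_rpow (Real.exp_pos _).le
        _ ≤ t ^ ((p : ℝ) * α) * Real.exp (-(ε / 2 * t)) := by
            apply mul_le_mul_of_nonneg_left _ (Real.rpow_nonneg ht0.le _)
            apply Real.exp_le_exp.mpr
            linarith
        _ ≤ (1 + K * Real.exp (ε * t / 4)) * Real.exp (-(ε / 2 * t)) :=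
            mul_le_mul_of_nonneg_right hstep (Real.exp_pos _).le
        _ = Real.exp (-(ε / 2 * t)) + K * Real.exp (-(ε / 4 * t)) := by
            rw [add_mul, one_mul, mul_assoc, e1]
        _ ≤ Real.exp (-(ε / 4 * t)) + K * Real.exp (-(ε / 4 * t)) :=
            add_le_add e2 (le_refl _)
        _ = C * Real.exp (-(ε / 4 * t)) := by rw [hCdef]; ring
        _ ≤ C * Real.exp (-(c * ∑ q : FreeIdx p, |v q|)) :=
            mul_le_mul_of_nonneg_left e3 hC
        _ = C * ∏ q : FreeIdx p, Real.exp (-(c * |v q|)) := by rw [e4]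
    calc ∫⁻ v in {v : FreeIdx p → ℝ | (toSym v).PosDef},
          ENNReal.ofReal ((toSym v).det ^ ((δ - 2) / 2) *
            Real.exp (-(1 / 2 : ℝ) * (toSym v * D).trace))
        ≤ ∫⁻ v in {v : FreeIdx p → ℝ | (toSym v).PosDef},
            ENNReal.ofReal (C * ∏ q : FreeIdx p, Real.exp (-(c * |v q|))) :=
          setLIntegral_mono hGmeas key
      _ ≤ ∫⁻ v : FreeIdx p → ℝ,
            ENNReal.ofReal (C * ∏ q : FreeIdx p, Real.exp (-(c * |v q|))) :=
          setLIntegral_le_lintegral _ _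
      _ < ⊤ := lintegral_prod_exp_lt_top hc hC
end
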